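/- Let ε, δ ∈ (0,1) and let T be the least positive integer satisfying (e^{ε/(1+ε)}/(1+ε))^T + (e^{-ε/(1-ε)}/(1-ε))^T ≤ δ. Then log(2/δ)/(log(1-ε) + ε/(1-ε)) ≤ T ≤ log(2/δ)/(log(1+ε) - ε/(1+ε)). -/

import Mathlib

set_option maxHeartbeats 1000000

open Real Set

private lemma hasDerivAtA (t : ℝ) (ht : -1 < t) :
    HasDerivAt (fun s : ℝ => s^2/2 - (Real.log (1+s) - s/(1+s)))
      (t - 1/(1+t) + 1/(1+t)^2) t := by
  have h1 : (1:ℝ) + t ≠ 0 := by linarith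
  have hsq : HasDerivAt (fun s : ℝ => s^2/2) t t := by
    have := (hasDerivAt_pow 2 t).div_const 2
    simpa using this
  have hlog : HasDerivAt (fun s : ℝ => Real.log (1+s)) (1/(1+t)) t := by
    have : HasDerivAt (fun s : ℝ => 1+s) 1 t := (hasDerivAt_id t).const_add 1
    simpa using this.log h1
  have hdiv : HasDerivAt (fun s : ℝ => s/(1+s)) (1/(1+t)^2) t := by
    have h : HasDerivAt (fun s : ℝ => 1+s) 1 t := (hasDerivAt_id t).const_add 1
    have := (hasDerivAt_id t).div h h1
    refine this.congr_deriv ?_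
    simp only [id]; ring
  have := hsq.sub (hlog.sub hdiv)
  refine this.congr_deriv ?_
  ring

private lemma A_le_sq {x : ℝ} (hx0 : 0 ≤ x) (hx1 : x ≤ 1) :
    Real.log (1+x) - x/(1+x) ≤ x^2/2 := by
  set F : ℝ → ℝ := fun s => s^2/2 - (Real.log (1+s) - s/(1+s)) with hF
  have key : MonotoneOn F (Icc (0:ℝ) 1) := by
    apply monotoneOn_of_deriv_nonneg (convex_Icc 0 1)
    · intro t ht
      exact (hasDerivAtA t (by linarith [ht.1])).continuousAt.continuousWithinAt
    · intro t ht
      rw [interior_Icc] at ht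
      exact (hasDerivAtA t (by linarith [ht.1])).differentiableAt.differentiableWithinAt
    · intro t ht
      rw [interior_Icc] at ht
      rw [(hasDerivAtA t (by linarith [ht.1])).deriv]
      have h1 : (0:ℝ) < 1 + t := by linarith [ht.1]
      rw [← sub_nonneg]
      have : t - 1/(1+t) + 1/(1+t)^2 - 0 = t^2*(2+t)/(1+t)^2 := by
        field_simp; ring
      rw [this]
      apply div_nonneg _ (by positivity)
      nlinarith [sq_nonneg t, ht.1]
  have h0 : F 0 ≤ F x := key (by simp) (by exact ⟨hx0, hx1⟩) hx0
  simp [hF] at h0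
  linarith [h0]

private lemma hasDerivAtB (t : ℝ) (ht : -1 < t) (ht1 : t < 1) :
    HasDerivAt (fun s : ℝ => s/(1-s) + Real.log (1-s) + s/(1+s) - Real.log (1+s) - 4/3*s^3)
      (1/(1-t)^2 - 1/(1-t) + 1/(1+t)^2 - 1/(1+t) - 4*t^2) t := by
  have h1 : (1:ℝ) + t ≠ 0 := by linarith
  have h2 : (1:ℝ) - t ≠ 0 := by linarith
  have hm : HasDerivAt (fun s : ℝ => 1-s) (-1) t := by
    simpa using ((hasDerivAt_id t).const_sub 1)
  have hp : HasDerivAt (fun s : ℝ => 1+s) 1 t := (hasDerivAt_id t).const_add 1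
  have hd1 : HasDerivAt (fun s : ℝ => s/(1-s)) (1/(1-t)^2) t := by
    have := (hasDerivAt_id t).div hm h2
    refine this.congr_deriv ?_; simp only [id]; ring
  have hd2 : HasDerivAt (fun s : ℝ => Real.log (1-s)) (-(1/(1-t))) t := by
    have := hm.log h2
    refine this.congr_deriv ?_; ring
  have hd3 : HasDerivAt (fun s : ℝ => s/(1+s)) (1/(1+t)^2) t := by
    have := (hasDerivAt_id t).div hp h1
    refine this.congr_deriv ?_; simp only [id]; ring
  have hd4 : HasDerivAt (fun s : ℝ => Real.log (1+s)) (1/(1+t)) t := by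
    simpa using hp.log h1
  have hd5 : HasDerivAt (fun s : ℝ => 4/3*s^3) (4*t^2) t := by
    have := (hasDerivAt_pow 3 t).const_mul (4/3 : ℝ)
    refine this.congr_deriv ?_; ring
  have := (((hd1.add hd2).add hd3).sub hd4).sub hd5
  refine this.congr_deriv ?_
  ring

private lemma B_sub_A_ge {x : ℝ} (hx0 : 0 ≤ x) (hx1 : x < 1) :
    4/3*x^3 ≤ (Real.log (1-x) + x/(1-x)) - (Real.log (1+x) - x/(1+x)) := by
  set G : ℝ → ℝ := fun s => s/(1-s) + Real.log (1-s) + s/(1+s) - Real.log (1+s) - 4/3*s^3 with hG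
  have key : MonotoneOn G (Icc (0:ℝ) x) := by
    apply monotoneOn_of_deriv_nonneg (convex_Icc 0 x)
    · intro t ht
      exact (hasDerivAtB t (by linarith [ht.1]) (by linarith [ht.2])).continuousAt.continuousWithinAt
    · intro t ht
      rw [interior_Icc] at ht
      exact (hasDerivAtB t (by linarith [ht.1]) (by linarith [ht.2])).differentiableAt.differentiableWithinAt
    · intro t ht
      rw [interior_Icc] at ht
      have ht0 : 0 < t := ht.1
      have ht1 : t < 1 := lt_of_lt_of_le ht.2 (le_of_lt hx1)
      rw [(hasDerivAtB t (by linarith) ht1).deriv]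
      have e1 : (0:ℝ) < 1 - t := by linarith
      have e2 : (0:ℝ) < 1 + t := by linarith
      have : 1/(1-t)^2 - 1/(1-t) + 1/(1+t)^2 - 1/(1+t) - 4*t^2 - 0
          = 4*t^2*(1 - (1-t^2)^2)/((1-t)^2*(1+t)^2) := by
        field_simp
        ring
      rw [← sub_nonneg, this]
      apply div_nonneg _ (by positivity)
      have h3 : (1-t^2)^2 ≤ 1 := by nlinarith [mul_pos e1 e2, sq_nonneg t]
      nlinarith [sq_nonneg t]
  have h0 : G 0 ≤ G x := key (by simp [hx0]) (by exact ⟨hx0, le_refl x⟩) hx0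
  simp [hG] at h0
  linarith [h0]

private lemma base_small {ε L : ℝ} (h0 : 0 < ε) (hc : ε ≤ 3/5) (hL : 0.6931 ≤ L) :
    ε/2 ≤ (4/3)*(L-ε^2/2)*(1-ε^2) := by
  nlinarith [sq_nonneg ε, mul_le_mul_of_nonneg_left hc h0.le, sq_nonneg (ε^2)]

private lemma q_large {ε A E : ℝ} (hc : 3/5 < ε) (hε1 : ε < 1) (hA0 : 0 < A)
    (hA1 : A ≤ ε^2/2) (hE2 : E ≤ 0.3679) :
    2*A^2*((1-ε)*(1+ε)) ≤ ((ε - E - A*(1-ε))*ε)*(1-2*A) := by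
  have hid : ((ε - E - A*(1-ε))*ε)*(1-2*A) - 2*A^2*((1-ε)*(1+ε))
      = ε*(1-ε^2)*(ε - ε^2/2 - E)
        + (ε^2/2 - A)*(2*ε*(ε-E) + ε*(1-ε) + 2*(1-ε)*(A+ε^2/2)) := by ring
  have h1 : 0 ≤ ε*(1-ε^2)*(ε - ε^2/2 - E) := by
    apply mul_nonneg (mul_nonneg (by linarith) (by nlinarith))
    nlinarith [mul_nonneg (by linarith : (0:ℝ) ≤ 1-ε) (by linarith : (0:ℝ) ≤ ε-3/5)]
  have h2 : 0 ≤ (ε^2/2 - A)*(2*ε*(ε-E) + ε*(1-ε) + 2*(1-ε)*(A+ε^2/2)) := by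
    apply mul_nonneg (by linarith)
    nlinarith [sq_nonneg ε]
  linarith [hid, h1, h2]

private lemma key_ineq {ε A B L E : ℝ} (hε0 : 0 < ε) (hε1 : ε < 1)
    (hA0 : 0 < A) (hA1 : A ≤ ε^2/2) (hA2 : A ≤ L - ε/(1+ε))
    (hBA : 4/3*ε^3 ≤ B - A) (hB : (1 - E)/(1-ε) - 1 ≤ B)
    (hL1 : 0.6931 ≤ L) (hL2 : L ≤ 0.6932)
    (hE1 : 0.3678 ≤ E) (hE2 : E ≤ 0.3679) :
    2*A^2 ≤ (B-A)*(L-A)*(1-2*A) := by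
  have h1p : (0:ℝ) < 1 + ε := by linarith
  have h1m : (0:ℝ) < 1 - ε := by linarith
  have c1 : 0 < 1 - 2*A := by nlinarith
  have hBA0 : 0 < B - A := lt_of_lt_of_le (by positivity) hBA
  have hA2' : A*(1+ε) ≤ L*(1+ε) - ε := by
    have h := mul_le_mul_of_nonneg_right hA2 h1p.le
    rw [sub_mul, div_mul_cancel₀ _ (ne_of_gt h1p)] at h
    exact h
  rcases le_or_gt ε (3/5) with hc | hc
  · -- small ε
    have d2 : (0:ℝ) < L - ε^2/2 := by nlinarith
    have d3 : L - ε^2/2 ≤ L - A := by linarith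
    have d4 : 1 - ε^2 ≤ 1 - 2*A := by linarith
    have p1 : (4/3*ε^3)*(L - ε^2/2) ≤ (B-A)*(L-A) :=
      mul_le_mul hBA d3 d2.le hBA0.le
    have p2 : ((4/3*ε^3)*(L - ε^2/2))*(1-ε^2) ≤ ((B-A)*(L-A))*(1-2*A) := by
      exact mul_le_mul p1 d4 (by nlinarith) (mul_nonneg hBA0.le (by linarith))
    have e1 : 2*A^2 ≤ ε^4/2 := by nlinarith [mul_le_mul hA1 hA1 hA0.le (by positivity)]
    have e2 : ε^4/2 ≤ ((4/3*ε^3)*(L - ε^2/2))*(1-ε^2) := by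
      have hcube : (0:ℝ) < ε^3 := by positivity
      have base := base_small hε0 hc hL1
      calc ε^4/2 = (ε/2)*ε^3 := by ring
        _ ≤ ((4/3)*(L - ε^2/2)*(1-ε^2))*ε^3 := mul_le_mul_of_nonneg_right base hcube.le
        _ = ((4/3*ε^3)*(L - ε^2/2))*(1-ε^2) := by ring
    linarith [e1.trans (e2.trans p2)]
  · -- large ε
    have hB' : ε - E ≤ B*(1-ε) := by
      have h := (div_le_iff₀ h1m).mp (show (1-E)/(1-ε) ≤ B + 1 by linarith)
      nlinarith [h]
    have c4 : ε - E - A*(1-ε) ≤ (B - A)*(1-ε) := by nlinarith [hB']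
    have c2 : ε ≤ (L - A)*(1+ε) := by nlinarith [hA2']
    have hLA : 0 ≤ L - A := by
      by_contra h
      push_neg at h
      linarith [c2, mul_neg_of_neg_of_pos h h1p]
    have p1 : (ε - E - A*(1-ε))*ε ≤ ((B-A)*(1-ε))*((L-A)*(1+ε)) :=
      mul_le_mul c4 c2 hε0.le (mul_nonneg hBA0.le h1m.le)
    have p2 : ((ε - E - A*(1-ε))*ε)*(1-2*A) ≤ (((B-A)*(1-ε))*((L-A)*(1+ε)))*(1-2*A) :=
      mul_le_mul_of_nonneg_right p1 c1.le
    have q := q_large hc hε1 hA0 hA1 hE2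
    have final : 2*A^2*((1-ε)*(1+ε)) ≤ ((B-A)*(L-A)*(1-2*A))*((1-ε)*(1+ε)) := by
      have e3 : (((B-A)*(1-ε))*((L-A)*(1+ε)))*(1-2*A)
          = ((B-A)*(L-A)*(1-2*A))*((1-ε)*(1+ε)) := by ring
      linarith [q.trans p2, e3]
    exact le_of_mul_le_mul_right final (mul_pos h1m h1p)

private lemma log_le_mul_exp_neg_one {x : ℝ} (hx : 0 < x) :
    Real.log x ≤ x * Real.exp (-1) := by
  have h := Real.add_one_le_exp (Real.log x - 1)
  have h2 : Real.exp (Real.log x - 1) = x * Real.exp (-1) := by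
    rw [Real.exp_sub, Real.exp_log hx, Real.exp_neg, div_eq_mul_inv]
  linarith [h, h2.le, h2.ge]

private lemma exp_neg_one_bounds :
    0.3678 ≤ Real.exp (-1) ∧ Real.exp (-1) ≤ 0.3679 := by
  have hinv : Real.exp (-1) * Real.exp 1 = 1 := by
    rw [← Real.exp_add]; norm_num
  have h1 := Real.exp_one_gt_d9
  have h2 := Real.exp_one_lt_d9
  have hp := (Real.exp_pos (-1)).le
  constructor <;> nlinarith [hinv, h1, h2, hp]

theorem stopping_threshold_bounds
    (ε δ : ℝ) (hε : ε ∈ Set.Ioo (0:ℝ) 1) (hδ : δ ∈ Set.Ioo (0:ℝ) 1)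
    (T : ℕ) (hTpos : 0 < T)
    (hT : (Real.exp (ε / (1 + ε)) / (1 + ε)) ^ T
            + (Real.exp (-ε / (1 - ε)) / (1 - ε)) ^ T ≤ δ)
    (hTmin : ∀ T' : ℕ, 0 < T' →
      (Real.exp (ε / (1 + ε)) / (1 + ε)) ^ T'
        + (Real.exp (-ε / (1 - ε)) / (1 - ε)) ^ T' ≤ δ → T ≤ T') :
    Real.log (2 / δ) / (Real.log (1 - ε) + ε / (1 - ε)) ≤ (T : ℝ) ∧
    (T : ℝ) ≤ Real.log (2 / δ) / (Real.log (1 + ε) - ε / (1 + ε)) := by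
  obtain ⟨hε0, hε1⟩ := hε
  obtain ⟨hδ0, hδ1⟩ := hδ
  have h1p : (0:ℝ) < 1 + ε := by linarith
  have h1m : (0:ℝ) < 1 - ε := by linarith
  obtain ⟨A, hA⟩ : ∃ x, x = Real.log (1 + ε) - ε / (1 + ε) := ⟨_, rfl⟩
  obtain ⟨B, hB⟩ : ∃ x, x = Real.log (1 - ε) + ε / (1 - ε) := ⟨_, rfl⟩
  rw [← hA, ← hB]
  -- rewrite the two bases as exponentials
  have ha : Real.exp (ε / (1 + ε)) / (1 + ε) = Real.exp (-A) := by
    rw [hA, neg_sub, Real.exp_sub, Real.exp_log h1p]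
  have hb : Real.exp (-ε / (1 - ε)) / (1 - ε) = Real.exp (-B) := by
    have h : -B = -ε / (1 - ε) - Real.log (1 - ε) := by rw [hB]; ring
    rw [h, Real.exp_sub, Real.exp_log h1m]
  -- basic bounds on A and B
  have hA1 : A ≤ ε^2/2 := hA ▸ A_le_sq hε0.le hε1.le
  have hA0 : 0 < A := by
    have h := Real.log_lt_sub_one_of_pos (x := (1+ε)⁻¹) (by positivity)
      (by intro h; rw [inv_eq_one] at h; linarith)
    rw [Real.log_inv] at h
    have h2 : (1+ε)⁻¹ - 1 = -(ε/(1+ε)) := by field_simp; ring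
    rw [hA]; linarith [h, h2]
  have hB0 : 0 < B := by
    have h := Real.log_lt_sub_one_of_pos (x := (1-ε)⁻¹) (by positivity)
      (by intro h; rw [inv_eq_one] at h; linarith)
    rw [Real.log_inv] at h
    have h2 : (1-ε)⁻¹ - 1 = ε/(1-ε) := by field_simp; ring
    rw [hB]; linarith [h, h2]
  have hBA : 4/3*ε^3 ≤ B - A := by rw [hA, hB]; exact B_sub_A_ge hε0.le hε1
  have hABlt : A < B := by linarith [hBA, pow_pos hε0 3]
  -- transformed hypotheses
  rw [ha, hb, ← Real.exp_nat_mul, ← Real.exp_nat_mul] at hT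
  have hmin' : ∀ n : ℕ, 0 < n →
      Real.exp ((n:ℝ) * (-A)) + Real.exp ((n:ℝ) * (-B)) ≤ δ → T ≤ n := by
    intro n hn h
    apply hTmin n hn
    rw [ha, hb, ← Real.exp_nat_mul, ← Real.exp_nat_mul]
    exact h
  have hlog2δ : Real.log (2/δ) = Real.log 2 - Real.log δ :=
    Real.log_div two_ne_zero (ne_of_gt hδ0)
  -- lower bound
  have hlow : Real.log (2/δ) ≤ (T:ℝ) * B := by
    have hbb : Real.exp ((T:ℝ)*(-B)) ≤ Real.exp ((T:ℝ)*(-A)) := by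
      apply Real.exp_le_exp.mpr
      apply mul_le_mul_of_nonneg_left (by linarith) (Nat.cast_nonneg T)
    have h2 : 2 * Real.exp ((T:ℝ)*(-B)) ≤ δ := by linarith [hT, hbb]
    have h3 := Real.log_le_log (by positivity) h2
    rw [Real.log_mul two_ne_zero (Real.exp_ne_zero _), Real.log_exp] at h3
    rw [hlog2δ]; linarith [h3]
  refine ⟨by rw [div_le_iff₀ hB0]; linarith [hlow], ?_⟩
  -- upper bound
  rw [le_div_iff₀ hA0]
  by_contra hcon
  push_neg at hcon
  -- hcon : log(2/δ) < T*A
  have hδlt : 2 * Real.exp (-((T:ℝ)*A)) < δ := by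
    have h1 : Real.log 2 - (T:ℝ)*A < Real.log δ := by rw [hlog2δ] at hcon; linarith
    have h2 := Real.exp_lt_exp.mpr h1
    rw [Real.exp_sub, Real.exp_log hδ0, Real.exp_log two_pos] at h2
    rw [Real.exp_neg]
    rw [div_eq_mul_inv] at h2
    linarith [h2]
  have hTA : Real.log 2 < (T:ℝ)*A := by
    have h1 : Real.exp (-((T:ℝ)*A)) < Real.exp (Real.log (1/2)) := by
      rw [Real.exp_log (by norm_num : (0:ℝ) < 1/2)]
      linarith [hδlt, hδ1]
    have h2 := Real.exp_lt_exp.mp h1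
    rw [Real.log_div one_ne_zero two_ne_zero, Real.log_one] at h2
    linarith [h2]
  have hL1 : (0.6931:ℝ) ≤ Real.log 2 := by linarith [Real.log_two_gt_d9]
  have hL2 : Real.log 2 ≤ (0.6932:ℝ) := by linarith [Real.log_two_lt_d9]
  have hT2 : 2 ≤ T := by
    by_contra h
    push_neg at h
    interval_cases T
    · simp at hTA
      linarith [hTA, hA1, hL1, mul_lt_mul_of_pos_left hε1 hε0]
  -- minimality fails at T-1
  have hcast : ((T - 1 : ℕ) : ℝ) = (T:ℝ) - 1 := by
    push_cast [Nat.cast_sub (by omega : 1 ≤ T)]; ring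
  set S : ℝ := (T:ℝ) - 1 with hS
  have hfail : δ < Real.exp (S*(-A)) + Real.exp (S*(-B)) := by
    by_contra h
    push_neg at h
    rw [← hcast] at h
    have := hmin' (T-1) (by omega) h
    omega
  have h12A : (0:ℝ) < 1 - 2*A := by linarith [hA1, hε1, mul_lt_mul_of_pos_left hε1 hε0]
  -- derive the contradiction chain
  have k1 : -((T:ℝ)*A) + S*A = -A := by rw [hS]; ring
  have k2 : S*(-A) + S*A = 0 := by ring
  have k3 : S*(-B) + S*A = S*(A-B) := by ring
  have e1 : 2*Real.exp (-A) < 1 + Real.exp (S*(A-B)) := by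
    have h := mul_lt_mul_of_pos_right (lt_trans hδlt hfail) (Real.exp_pos (S*A))
    rw [add_mul, mul_assoc, ← Real.exp_add, ← Real.exp_add, ← Real.exp_add,
      k1, k2, k3, Real.exp_zero] at h
    exact h
  have e2 : 1 - 2*A < Real.exp (S*(A-B)) := by
    have h := Real.add_one_le_exp (-A)
    linarith [e1, h]
  have e3 : S*(B-A) < -Real.log (1-2*A) := by
    have h := Real.log_lt_log h12A e2
    rw [Real.log_exp] at h
    linarith [h]
  have e4 : -Real.log (1-2*A) ≤ 2*A/(1-2*A) := by
    have h := Real.one_sub_inv_le_log_of_pos h12A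
    have h2 : (1-2*A)⁻¹ - 1 = 2*A/(1-2*A) := by field_simp; ring
    linarith [h, h2.le, h2.ge]
  have e34 : (S*(B-A))*(1-2*A) < 2*A := by
    have h := mul_lt_mul_of_pos_right (lt_of_lt_of_le e3 e4) h12A
    rw [div_mul_cancel₀ _ (ne_of_gt h12A)] at h
    exact h
  have e5 : Real.log 2 - A < S*A := by
    have h : S*A = (T:ℝ)*A - A := by rw [hS]; ring
    linarith [hTA, h.le, h.ge]
  -- key inequality
  have hA2 : A ≤ Real.log 2 - ε/(1+ε) := by
    have h : Real.log (1+ε) ≤ Real.log 2 := Real.log_le_log (by linarith) (by linarith)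
    rw [hA]; linarith [h]
  obtain ⟨hE1, hE2⟩ := exp_neg_one_bounds
  have hBlow : (1 - Real.exp (-1))/(1-ε) - 1 ≤ B := by
    have hx : (0:ℝ) < (1-ε)⁻¹ := by positivity
    have h := log_le_mul_exp_neg_one hx
    rw [Real.log_inv] at h
    have h2 : (1 - Real.exp (-1))/(1-ε) - 1 = ε/(1-ε) - (1-ε)⁻¹ * Real.exp (-1) := by
      field_simp
      ring
    rw [hB]; linarith [h, h2.le, h2.ge]
  have hkey := key_ineq hε0 hε1 hA0 hA1 hA2 hBA hBlow hL1 hL2 hE1 hE2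
  -- combine: (log2 - A)*(B-A)*(1-2A) < 2A^2 contradicts hkey
  have hBA0 : (0:ℝ) < B - A := by linarith [hABlt]
  have f1 : (Real.log 2 - A)*((B-A)*(1-2*A)) < (S*A)*((B-A)*(1-2*A)) :=
    mul_lt_mul_of_pos_right e5 (mul_pos hBA0 h12A)
  have f2 : (S*A)*((B-A)*(1-2*A)) = A*((S*(B-A))*(1-2*A)) := by ring
  have f3 : A*((S*(B-A))*(1-2*A)) < A*(2*A) :=
    (mul_lt_mul_iff_right₀ hA0).mpr e34
  have f4 : (B-A)*(Real.log 2-A)*(1-2*A) = (Real.log 2 - A)*((B-A)*(1-2*A)) := by ring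
  linarith [hkey, f1, f2, f3, f4]
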